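/- If N ≥ 2, 1 ≤ n ≤ N, and ā = (a_2,…,a_N) and ā' = (a'_2,…,a'_N) are two tuples with a_i, a'_i ∈ {1,…,i} for each i that differ in exactly one coordinate, then, writing π(ā) = (N,a_N) ∘ ⋯ ∘ (2,a_2) and π(ā') = (N,a'_N) ∘ ⋯ ∘ (2,a'_2) for the corresponding compositions of transpositions of {1,…,N}, the permutations π(ā) and π(ā') differ on at most 3 points of {1,…,N}; consequently the tuples (π(ā)(N), π(ā)(N−1), …, π(ā)(N−n+1)) and (π(ā')(N), π(ā')(N−1), …, π(ā')(N−n+1)) differ in at most 3 coordinates (Hamming distance at most 3). -/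

import Mathlib

/-!
Sensitivity of the Fisher–Yates composition in a single coordinate: if the
tuples `ā` and `ā'` (with `a_i, a'_i ∈ {1, …, i}`) differ in exactly one
coordinate, then the permutations
`π(ā) = (N, a_N) ∘ ⋯ ∘ (2, a_2)` and `π(ā')` differ on at most `3` points,
and hence the tuples `(π(ā)(N), …, π(ā)(N−n+1))` and
`(π(ā')(N), …, π(ā')(N−n+1))` have Hamming distance at most `3`.

Points are `0`-indexed: the entry `π(N − j + 1)` (for `j = 1, …, n`,
`1`-indexed) becomes `π(ā) ⟨N - 1 - j, _⟩` for `j : Fin n`.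
-/

open scoped Classical

lemma split_prod {G : Type*} [Monoid G] {N : ℕ} (f : Fin N → G) (i : Fin N) :
    (List.ofFn f).reverse.prod =
      ((List.ofFn f).drop (i + 1)).reverse.prod * f i *
        ((List.ofFn f).take i).reverse.prod := by
  conv_lhs => rw [← List.take_append_drop i (List.ofFn f),
    List.drop_eq_getElem_cons (by simp [i.2])]
  simp [List.reverse_append, List.prod_append, mul_assoc]

noncomputable def fisherYates (N : ℕ) (a : ∀ i : Fin N, Fin (i.1 + 1)) :
    Equiv.Perm (Fin N) :=
  (List.ofFn (fun i : Fin N => Equiv.swap i (Fin.castLE i.2 (a i)))).reverse.prod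

theorem fisher_yates_single_coordinate_sensitivity (N n : ℕ) (hN : 2 ≤ N)
    (hn1 : 1 ≤ n) (hnN : n ≤ N)
    (a a' : ∀ i : Fin N, Fin (i.1 + 1))
    (hdiff : ∃ i : Fin N, a i ≠ a' i ∧ ∀ j : Fin N, j ≠ i → a j = a' j) :
    (Finset.univ.filter
        (fun x : Fin N => fisherYates N a x ≠ fisherYates N a' x)).card ≤ 3
    ∧ (Finset.univ.filter
        (fun j : Fin n =>
          fisherYates N a ⟨N - 1 - j.1, by omega⟩ ≠
            fisherYates N a' ⟨N - 1 - j.1, by omega⟩)).card ≤ 3 := by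
  obtain ⟨i, hi, hoff⟩ := hdiff
  set f : Fin N → Equiv.Perm (Fin N) :=
    fun j => Equiv.swap j (Fin.castLE j.2 (a j)) with hf
  set f' : Fin N → Equiv.Perm (Fin N) :=
    fun j => Equiv.swap j (Fin.castLE j.2 (a' j)) with hf'
  have htake : (List.ofFn f).take i = (List.ofFn f').take i := by
    apply List.ext_getElem (by simp)
    intro k h1 h2
    simp only [List.getElem_take, List.getElem_ofFn]
    have hk : k < N := by simp at h1; omega
    have : (⟨k, hk⟩ : Fin N) ≠ i := by
      intro h
      have := congrArg Fin.val h
      simp at h1 this; omega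
    simp [hf, hf', hoff _ this]
  have hdrop : (List.ofFn f).drop (i + 1) = (List.ofFn f').drop (i + 1) := by
    apply List.ext_getElem (by simp)
    intro k h1 h2
    simp only [List.getElem_drop, List.getElem_ofFn]
    have hk : i + 1 + k < N := by simp at h1; omega
    have : (⟨i + 1 + k, hk⟩ : Fin N) ≠ i := by
      intro h
      have := congrArg Fin.val h
      simp at this; omega
    simp [hf, hf', hoff _ this]
  set S : Equiv.Perm (Fin N) := ((List.ofFn f).drop (i + 1)).reverse.prod with hS
  set P : Equiv.Perm (Fin N) := ((List.ofFn f).take i).reverse.prod with hP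
  have hA : fisherYates N a = S * f i * P := split_prod f i
  have hA' : fisherYates N a' = S * f' i * P := by
    rw [show fisherYates N a' = (List.ofFn f').reverse.prod from rfl, split_prod f' i,
      ← htake, ← hdrop]
  set σ : Equiv.Perm (Fin N) := fisherYates N a * (fisherYates N a')⁻¹ with hσ
  have hσ_eq : σ = S * (f i * f' i) * S⁻¹ := by
    rw [hσ, hA, hA']
    have : (f' i)⁻¹ = f' i := by simp [hf']
    simp [mul_assoc, this]
  -- support of f i * f' i ⊆ {i, b, b'}
  have hτ : (f i * f' i).support ⊆ {i, Fin.castLE i.2 (a i), Fin.castLE i.2 (a' i)} := by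
    intro x hx
    simp only [Equiv.Perm.mem_support] at hx
    by_contra hmem
    simp only [Finset.mem_insert, Finset.mem_singleton, not_or] at hmem
    obtain ⟨h1, h2, h3⟩ := hmem
    apply hx
    simp [hf, hf', Equiv.swap_apply_of_ne_of_ne, h1, h2, h3]
  have hτcard : (f i * f' i).support.card ≤ 3 := by
    calc (f i * f' i).support.card ≤ _ := Finset.card_le_card hτ
    _ ≤ 3 := by
      apply le_trans (Finset.card_insert_le _ _)
      have := Finset.card_insert_le (Fin.castLE i.2 (a i))
        ({Fin.castLE i.2 (a' i)} : Finset (Fin N))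
      simp at this ⊢; omega
  have hσcard : σ.support.card ≤ 3 := by
    rw [hσ_eq, Equiv.Perm.support_conj, Finset.card_map]
    exact hτcard
  have h1 : (Finset.univ.filter
      (fun x : Fin N => fisherYates N a x ≠ fisherYates N a' x)).card ≤ 3 := by
    refine le_trans (Finset.card_le_card_of_injOn (fisherYates N a') ?_ ?_) hσcard
    · intro x hx
      simp only [Finset.mem_coe, Finset.mem_filter, Finset.mem_univ, true_and] at hx
      simp only [Finset.mem_coe, Equiv.Perm.mem_support, hσ]
      simpa using fun h => hx (by simpa using h)
    · intro x _ y _ h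
      exact (fisherYates N a').injective h
  refine ⟨h1, ?_⟩
  refine le_trans (Finset.card_le_card_of_injOn
    (fun j : Fin n => (⟨N - 1 - j.1, by omega⟩ : Fin N)) ?_ ?_) h1
  · intro j hj
    simp only [Finset.mem_coe, Finset.mem_filter, Finset.mem_univ, true_and] at hj ⊢
    exact hj
  · intro x _ y _ h
    have := congrArg Fin.val h
    simp at this
    have hx := x.2; have hy := y.2
    exact Fin.ext (by omega)
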